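/- Fix m = |M| and k. Consider any deterministic node-oblivious decision rule vector (f, g, h) on the k-ary tree satisfying Assumptions 1, 2 and 3. Then there exists a constant C = C(f, m, k) < ∞ such that for all depths t, the probability of error satisfies P(σ_root ≠ s) ≥ exp(−C·n^ρ), where n = k^t and ρ = 1 + log(1 − k^{−(m−1)})/((m−1)·log k) < 1. -/

import Mathlib

/-!
Node-oblivious deterministic decision rules on the `k`-ary tree: every leaf applies the
same rule `g : X → M` to its private signal (i.i.d. with law `p₀` under `s = 0` and
`p₁` under `s = 1`, both everywhere positive on the finite set `X`), every internal
non-root node applies the same rule `f : Mᵏ → M` to its children's messages, and the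
root applies `h : Mᵏ → Bool`.  The state of the world `s` is uniform on `{0,1}`.

We formalize the subexponential lower bound on the error probability under the three
irreducibility assumptions, in terms of the diameter `d` of the dependence graph.
-/

/-- `p` is an everywhere-positive probability distribution on the finite set `X`. -/
def IsPositiveDist {X : Type} [Fintype X] (p : X → ℝ) : Prop :=
  (∀ x, 0 < p x) ∧ ∑ x, p x = 1

/-- Message distribution at a node of level `τ` (distance `τ` from the leaves) for the
node-oblivious deterministic rule vector with leaf rule `g` and internal rule `f`,
when the private signals are i.i.d. with law `p`. -/
noncomputable def oblDist {X M : Type} [Fintype X] [Fintype M] [DecidableEq M] {k : ℕ}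
    (p : X → ℝ) (g : X → M) (f : (Fin k → M) → M) : ℕ → M → ℝ
  | 0, μ => ∑ x, if g x = μ then p x else 0
  | τ + 1, μ => ∑ σ : Fin k → M, if f σ = μ then ∏ i, oblDist p g f τ (σ i) else 0

/-- Root error probability `P(σ_root ≠ s)` (uniform prior on `s`) for the
node-oblivious protocol `(f, g, h)`; the root's children are at level `t`, so the
total depth is `t + 1` and there are `n = k^(t+1)` private signals. -/
noncomputable def oblErr {X M : Type} [Fintype X] [Fintype M] [DecidableEq M] {k : ℕ}
    (p₀ p₁ : X → ℝ) (g : X → M) (f : (Fin k → M) → M) (h : (Fin k → M) → Bool)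
    (t : ℕ) : ℝ :=
  (1 / 2) * (∑ σ : Fin k → M, if h σ = true then ∏ i, oblDist p₀ g f t (σ i) else 0) +
  (1 / 2) * (∑ σ : Fin k → M, if h σ = false then ∏ i, oblDist p₁ g f t (σ i) else 0)

/-- The dependence graph of `f`: there is a directed edge from `μ` to `ν` iff there is
an input vector `α ∈ Mᵏ` in which `ν` appears at least once and `f α = μ`. -/
def DepEdge {M : Type} {k : ℕ} (f : (Fin k → M) → M) (μ ν : M) : Prop :=
  ∃ α : Fin k → M, (∃ i, α i = ν) ∧ f α = μ

/-- `HasPath f n μ ν`: the dependence graph of `f` contains a directed path with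
exactly `n` edges from `μ` to `ν`. -/
def HasPath {M : Type} {k : ℕ} (f : (Fin k → M) → M) : ℕ → M → M → Prop
  | 0, μ, ν => μ = ν
  | n + 1, μ, ν => ∃ ξ, DepEdge f μ ξ ∧ HasPath f n ξ ν

/-- `d` is the diameter of the dependence graph of `f`: every ordered pair of distinct
vertices is joined by a directed path of length at most `d`, and some ordered pair of
distinct vertices has no directed path of length less than `d`. -/
def IsDiameter {M : Type} {k : ℕ} (f : (Fin k → M) → M) (d : ℕ) : Prop :=
  (∀ μ ν : M, μ ≠ ν → ∃ n, n ≤ d ∧ HasPath f n μ ν) ∧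
  (∃ μ ν : M, μ ≠ ν ∧ ∀ n, n < d → ¬HasPath f n μ ν)

section Aux
variable {X M : Type} [Fintype X] [Fintype M] [DecidableEq M] {k : ℕ}
  (p : X → ℝ) (g : X → M) (f : (Fin k → M) → M)

lemma oblDist_nonneg (hp : ∀ x, 0 ≤ p x) : ∀ τ μ, 0 ≤ oblDist p g f τ μ := by
  intro τ
  induction τ with
  | zero =>
    intro μ
    apply Finset.sum_nonneg
    intro x _
    split <;> simp [hp x]
  | succ τ ih =>
    intro μ
    apply Finset.sum_nonneg
    intro σ _
    split
    · exact Finset.prod_nonneg fun i _ => ih (σ i)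
    · exact le_refl _

lemma oblDist_sum (hsum : ∑ x, p x = 1) :
    ∀ τ, ∑ μ, oblDist p g f τ μ = 1 := by
  intro τ
  induction τ with
  | zero =>
    show ∑ μ, ∑ x, (if g x = μ then p x else 0) = 1
    rw [Finset.sum_comm]
    simpa using hsum
  | succ τ ih =>
    show ∑ μ, ∑ σ : Fin k → M, (if f σ = μ then ∏ i, oblDist p g f τ (σ i) else 0) = 1
    rw [Finset.sum_comm]
    have : ∀ σ : Fin k → M, ∑ μ, (if f σ = μ then ∏ i, oblDist p g f τ (σ i) else 0)
        = ∏ i, oblDist p g f τ (σ i) := by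
      intro σ
      simp
    rw [Finset.sum_congr rfl (fun σ _ => this σ)]
    rw [← Fintype.sum_pow (fun μ => oblDist p g f τ μ) k, ih, one_pow]

lemma oblDist_le_one (hp : ∀ x, 0 ≤ p x) (hsum : ∑ x, p x = 1) (τ : ℕ) (μ : M) :
    oblDist p g f τ μ ≤ 1 := by
  rw [← oblDist_sum p g f hsum τ]
  exact Finset.single_le_sum (fun ν _ => oblDist_nonneg p g f hp τ ν) (Finset.mem_univ μ)

lemma oblDist_pos_trans (p' : X → ℝ) (hp : ∀ x, 0 < p x) (hp' : ∀ x, 0 < p' x) :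
    ∀ τ μ, 0 < oblDist p g f τ μ → 0 < oblDist p' g f τ μ := by
  intro τ
  induction τ with
  | zero =>
    intro μ hpos
    have hex : ∃ x, g x = μ := by
      by_contra hno
      push_neg at hno
      have : oblDist p g f 0 μ = 0 := by
        show (∑ x, if g x = μ then p x else 0) = 0
        exact Finset.sum_eq_zero fun x _ => by simp [hno x]
      rw [this] at hpos; exact lt_irrefl 0 hpos
    obtain ⟨x₀, hx₀⟩ := hex
    show 0 < ∑ x, if g x = μ then p' x else 0
    apply Finset.sum_pos' (fun x _ => by split <;> simp [(hp' x).le])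
    exact ⟨x₀, Finset.mem_univ x₀, by simp [hx₀, hp' x₀]⟩
  | succ τ ih =>
    intro μ hpos
    have hex : ∃ σ : Fin k → M, f σ = μ ∧ ∀ i, 0 < oblDist p g f τ (σ i) := by
      by_contra hno
      push_neg at hno
      have : oblDist p g f (τ+1) μ ≤ 0 := by
        show (∑ σ : Fin k → M, if f σ = μ then ∏ i, oblDist p g f τ (σ i) else 0) ≤ 0
        apply Finset.sum_nonpos
        intro σ _
        split
        · rename_i hfσ
          obtain ⟨i₀, hi₀⟩ := hno σ hfσ
          have hz : oblDist p g f τ (σ i₀) = 0 :=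
            le_antisymm hi₀ (oblDist_nonneg p g f (fun x => (hp x).le) τ (σ i₀))
          rw [le_iff_lt_or_eq]
          right
          exact Finset.prod_eq_zero (Finset.mem_univ i₀) hz
        · exact le_refl _
      exact absurd hpos (not_lt.mpr this)
    obtain ⟨σ₀, hfσ₀, hσ₀⟩ := hex
    show 0 < ∑ σ : Fin k → M, if f σ = μ then ∏ i, oblDist p' g f τ (σ i) else 0
    apply Finset.sum_pos'
    · intro σ _
      split
      · exact Finset.prod_nonneg fun i _ =>
          oblDist_nonneg p' g f (fun x => (hp' x).le) τ (σ i)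
      · exact le_refl _
    · refine ⟨σ₀, Finset.mem_univ σ₀, ?_⟩
      simp only [hfσ₀, if_pos rfl]
      exact Finset.prod_pos fun i _ => ih (σ₀ i) (hσ₀ i)

end Aux

section Paths
variable {M : Type} [Fintype M] {k : ℕ} (f : (Fin k → M) → M)

lemma hasPath_succ_iff (n : ℕ) (μ ν : M) :
    HasPath f (n + 1) μ ν ↔ ∃ ξ, HasPath f n μ ξ ∧ DepEdge f ξ ν := by
  induction n generalizing μ with
  | zero =>
    constructor
    · rintro ⟨ξ, he, hp⟩
      exact ⟨μ, rfl, by rwa [show ξ = ν from hp] at he⟩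
    · rintro ⟨ξ, hp, he⟩
      exact ⟨ν, by rwa [show μ = ξ from hp], rfl⟩
  | succ n ih =>
    constructor
    · rintro ⟨ξ, he, hp⟩
      obtain ⟨ζ, hp', he'⟩ := (ih ξ).mp hp
      exact ⟨ζ, ⟨ξ, he, hp'⟩, he'⟩
    · rintro ⟨ζ, ⟨ξ, he, hp⟩, he'⟩
      exact ⟨ξ, he, (ih ξ).mpr ⟨ζ, hp, he'⟩⟩

lemma hasPath_shorten (μ ν : M) (hpath : ∃ n, HasPath f n μ ν) :
    ∃ n ≤ Fintype.card M - 1, HasPath f n μ ν := by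
  classical
  set T : ℕ → Finset M := fun j =>
    Finset.univ.filter (fun ξ => ∃ i ≤ j, HasPath f i μ ξ) with hT
  have hmem : ∀ j ξ, ξ ∈ T j ↔ ∃ i ≤ j, HasPath f i μ ξ := by
    intro j ξ; simp [hT]
  have hmono : ∀ a b, a ≤ b → T a ⊆ T b := by
    intro a b hab ξ hξ
    rw [hmem] at hξ ⊢
    obtain ⟨i, hi, hp⟩ := hξ
    exact ⟨i, hi.trans hab, hp⟩
  have hstep : ∀ j ξ, ξ ∈ T (j + 1) → ξ ∈ T j ∨ ∃ ζ ∈ T j, DepEdge f ζ ξ := by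
    intro j ξ hξ
    rw [hmem] at hξ
    obtain ⟨i, hi, hp⟩ := hξ
    rcases Nat.lt_or_ge i (j + 1) with hlt | hge
    · exact Or.inl ((hmem j ξ).mpr ⟨i, Nat.lt_succ_iff.mp hlt, hp⟩)
    · have : i = j + 1 := le_antisymm hi hge
      subst this
      obtain ⟨ζ, hp', he⟩ := (hasPath_succ_iff f j μ ξ).mp hp
      exact Or.inr ⟨ζ, (hmem j ζ).mpr ⟨j, le_refl j, hp'⟩, he⟩
  have hback : ∀ j ζ ξ, ζ ∈ T j → DepEdge f ζ ξ → ξ ∈ T (j + 1) := by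
    intro j ζ ξ hζ he
    rw [hmem] at hζ ⊢
    obtain ⟨i, hi, hp⟩ := hζ
    exact ⟨i + 1, Nat.succ_le_succ hi, (hasPath_succ_iff f i μ ξ).mpr ⟨ζ, hp, he⟩⟩
  -- fixed point propagation
  have hfix : ∀ j, T j = T (j + 1) → ∀ i, T j = T (j + i) := by
    intro j hj i
    induction i with
    | zero => rfl
    | succ i ih =>
      apply Finset.Subset.antisymm (hmono j (j + (i+1)) (by omega))
      intro ξ hξ
      have : j + (i + 1) = (j + i) + 1 := by omega
      rw [this] at hξ
      rcases hstep (j + i) ξ hξ with h1 | ⟨ζ, hζ, he⟩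
      · rwa [← ih] at h1
      · rw [← ih] at hζ
        rw [hj]
        exact hback j ζ ξ hζ he
  obtain ⟨n, hn⟩ := hpath
  have hν : ν ∈ T n := (hmem n ν).mpr ⟨n, le_refl n, hn⟩
  set m := Fintype.card M with hm
  have hμ0 : μ ∈ T 0 := (hmem 0 μ).mpr ⟨0, le_refl 0, rfl⟩
  -- goal: ν ∈ T (m - 1)
  suffices hgoal : ν ∈ T (m - 1) by
    obtain ⟨i, hi, hp⟩ := (hmem _ ν).mp hgoal
    exact ⟨i, hi, hp⟩
  by_cases hex : ∃ j < m - 1, T j = T (j + 1)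
  · obtain ⟨j, hj, hjfix⟩ := hex
    rcases Nat.lt_or_ge n j with h1 | h2
    · exact hmono n (m - 1) (by omega) hν
    · have hTj : T j = T n := by
        have := hfix j hjfix (n - j); rwa [Nat.add_sub_cancel' h2] at this
      have hν' : ν ∈ T j := by rw [hTj]; exact hν
      exact hmono j (m - 1) (by omega) hν'
  · push_neg at hex
    have hcard : ∀ j ≤ m - 1, j + 1 ≤ (T j).card := by
      intro j hj
      induction j with
      | zero => exact Finset.card_pos.mpr ⟨μ, hμ0⟩
      | succ j ih =>
        have h1 : j + 1 ≤ (T j).card := ih (by omega)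
        have h2 : T j ⊂ T (j + 1) :=
          ssubset_of_subset_of_ne (hmono j (j+1) (by omega)) (hex j (by omega))
        have := Finset.card_lt_card h2
        omega
    have : (T (m - 1)).card = m := by
      have h1 := hcard (m - 1) (le_refl _)
      have h2 : (T (m-1)).card ≤ m := by
        rw [hm]; exact Finset.card_le_univ _
      have hm1 : 1 ≤ m := Fintype.card_pos_iff.mpr ⟨μ⟩
      omega
    have : T (m - 1) = Finset.univ := Finset.eq_univ_of_card _ this
    rw [this]; exact Finset.mem_univ ν

end Paths

set_option maxHeartbeats 4000000 in
/-- **Corollary: subexponential decay with exponent depending only on `m = |M|`.**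
Fix the finite message alphabet `M`, `m = |M| ≥ 3`, and `k ≥ 2`.  For any
deterministic node-oblivious rule vector `(f, g, h)` satisfying the three
irreducibility assumptions, there is a constant `C < ∞` (depending on `f`, `m`, `k`)
such that for every total depth `t + 1`,
`P(σ_root ≠ s) ≥ exp (-C n^ρ)` with `n = k^(t+1)` the number of private signals and
`ρ = 1 + log (1 - k^{-(m-1)}) / ((m-1) log k) < 1`. -/
theorem node_oblivious_subexponential_lower_bound_card
    (X M : Type) [Fintype X] [Fintype M] [DecidableEq M]
    (k : ℕ) (hk : 2 ≤ k) (hM : 3 ≤ Fintype.card M)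
    (p₀ p₁ : X → ℝ) (hp₀ : IsPositiveDist p₀) (hp₁ : IsPositiveDist p₁)
    (g : X → M) (f : (Fin k → M) → M) (h : (Fin k → M) → Bool)
    (hA1 : ∀ μ ν : M, μ ≠ ν → ∃ n, HasPath f n μ ν)
    (τ₀ : ℕ) (hτ₀ : 0 < τ₀) (hA2 : ∀ μ : M, 0 < oblDist p₀ g f τ₀ μ)
    (μm μp : M) (η : ℝ) (hη : 0 < η) (τd : ℕ)
    (hA3 : ∀ τ, τd < τ → η < oblDist p₀ g f τ μm ∧ η < oblDist p₁ g f τ μp) :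
    1 + Real.log (1 - ((k : ℝ) ^ (Fintype.card M - 1))⁻¹) /
        ((Fintype.card M - 1 : ℕ) * Real.log k) < 1 ∧
    ∃ C : ℝ, ∀ t : ℕ,
      Real.exp (-C * ((k : ℝ) ^ (t + 1)) ^
          (1 + Real.log (1 - ((k : ℝ) ^ (Fintype.card M - 1))⁻¹) /
            ((Fintype.card M - 1 : ℕ) * Real.log k))) ≤
        oblErr p₀ p₁ g f h t := by
  classical
  obtain ⟨hp₀pos, hp₀sum⟩ := hp₀
  obtain ⟨hp₁pos, hp₁sum⟩ := hp₁
  have hMne : Nonempty M := Fintype.card_pos_iff.mp (by omega)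
  set D : ℕ := Fintype.card M - 1 with hDdef
  have hD2 : 2 ≤ D := by omega
  have hk1 : (1:ℝ) < (k:ℝ) := by exact_mod_cast (by omega : 1 < k)
  have hk2 : (2:ℝ) ≤ (k:ℝ) := by exact_mod_cast hk
  -- basic facts about q := oblDist p₀
  set q : ℕ → M → ℝ := oblDist p₀ g f with hqdef
  have hq0 : ∀ τ μ, 0 ≤ q τ μ := oblDist_nonneg p₀ g f (fun x => (hp₀pos x).le)
  have hq1 : ∀ τ μ, q τ μ ≤ 1 :=
    oblDist_le_one p₀ g f (fun x => (hp₀pos x).le) hp₀sum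
  -- the minimum probability at each level
  set w : ℕ → ℝ := fun τ => Finset.univ.inf' Finset.univ_nonempty (q τ) with hwdef
  have hw_le : ∀ τ μ, w τ ≤ q τ μ := fun τ μ =>
    Finset.inf'_le _ (Finset.mem_univ μ)
  have hw_eq : ∀ τ, ∃ μ, w τ = q τ μ := by
    intro τ
    obtain ⟨μ, _, hμ⟩ := Finset.exists_mem_eq_inf' (Finset.univ_nonempty) (q τ)
    exact ⟨μ, hμ⟩
  have hw0 : ∀ τ, 0 ≤ w τ := by
    intro τ; obtain ⟨μ, hμ⟩ := hw_eq τ; rw [hμ]; exact hq0 τ μ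
  have hw1 : ∀ τ, w τ ≤ 1 := by
    intro τ; obtain ⟨μ, hμ⟩ := hw_eq τ; rw [hμ]; exact hq1 τ μ
  -- every message has a producing configuration
  have hin : ∀ μ : M, ∃ α : Fin k → M, f α = μ := by
    intro μ
    obtain ⟨ν, hν⟩ := Fintype.exists_ne_of_one_lt_card (by omega) μ
    obtain ⟨n, hn⟩ := hA1 μ ν hν.symm  -- careful direction
    match n, hn with
    | 0, hn => exact absurd hn hν.symm
    | n+1, ⟨ξ, ⟨α, _, hα⟩, _⟩ => exact ⟨α, hα⟩
  -- positivity for all levels ≥ τ₀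
  have hq_pos : ∀ τ, τ₀ ≤ τ → ∀ μ, 0 < q τ μ := by
    intro τ hτ
    induction τ, hτ using Nat.le_induction with
    | base => exact hA2
    | succ τ hτ ih =>
      intro μ
      obtain ⟨α, hα⟩ := hin μ
      show 0 < oblDist p₀ g f (τ+1) μ
      show 0 < ∑ σ : Fin k → M, if f σ = μ then ∏ i, oblDist p₀ g f τ (σ i) else 0
      apply Finset.sum_pos'
      · intro σ _
        split
        · exact Finset.prod_nonneg fun i _ => hq0 τ (σ i)
        · exact le_refl _
      · exact ⟨α, Finset.mem_univ α, by
          simp only [hα, if_pos rfl]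
          exact Finset.prod_pos fun i _ => ih (α i)⟩
  have hw_pos : ∀ τ, τ₀ ≤ τ → 0 < w τ := by
    intro τ hτ; obtain ⟨μ, hμ⟩ := hw_eq τ; rw [hμ]; exact hq_pos τ hτ μ
  -- edge bound
  have hedge : ∀ τ (μ ν : M), DepEdge f μ ν →
      q τ ν * w τ ^ (k-1) ≤ q (τ+1) μ := by
    intro τ μ ν ⟨α, ⟨i₀, hi₀⟩, hα⟩
    have hterm : (∏ i, q τ (α i)) ≤ q (τ+1) μ := by
      show (∏ i, q τ (α i)) ≤ ∑ σ : Fin k → M, if f σ = μ then ∏ i, oblDist p₀ g f τ (σ i) else 0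
      have := Finset.single_le_sum (f := fun σ : Fin k → M =>
        if f σ = μ then ∏ i, oblDist p₀ g f τ (σ i) else 0)
        (fun σ _ => by (try dsimp only); split
                       · exact Finset.prod_nonneg fun i _ => hq0 τ (σ i)
                       · exact le_refl _)
        (Finset.mem_univ α)
      simpa [hα] using this
    refine le_trans ?_ hterm
    rw [← Finset.mul_prod_erase Finset.univ (fun i => q τ (α i)) (Finset.mem_univ i₀), hi₀]
    apply mul_le_mul_of_nonneg_left _ (hq0 τ ν)
    calc w τ ^ (k-1) = ∏ _i ∈ Finset.univ.erase i₀, w τ := by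
          rw [Finset.prod_const]
          congr 1
          rw [Finset.card_erase_of_mem (Finset.mem_univ i₀), Finset.card_univ, Fintype.card_fin]
      _ ≤ ∏ i ∈ Finset.univ.erase i₀, q τ (α i) :=
          Finset.prod_le_prod (fun i _ => hw0 τ) (fun i _ => hw_le τ (α i))
  -- path bound
  have hpathb : ∀ (j : ℕ) (μ ν : M) (τ : ℕ), HasPath f j μ ν →
      q τ ν * ∏ i ∈ Finset.range j, w (τ + i) ^ (k-1) ≤ q (τ + j) μ := by
    intro j
    induction j with
    | zero =>
      intro μ ν τ hp
      rw [show μ = ν from hp]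
      simp
    | succ j ih =>
      intro μ ν τ hp
      obtain ⟨ξ, he, hp'⟩ := hp
      have h1 := ih ξ ν τ hp'
      have h2 := hedge (τ + j) μ ξ he
      calc q τ ν * ∏ i ∈ Finset.range (j+1), w (τ + i) ^ (k-1)
          = (q τ ν * ∏ i ∈ Finset.range j, w (τ + i) ^ (k-1)) * w (τ + j) ^ (k-1) := by
            rw [Finset.prod_range_succ]; ring
        _ ≤ q (τ + j) ξ * w (τ + j) ^ (k-1) :=
            mul_le_mul_of_nonneg_right h1 (pow_nonneg (hw0 _) _)
        _ ≤ q ((τ + j) + 1) μ := h2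
        _ = q (τ + (j+1)) μ := rfl
  -- recursion for the minimum probability
  set b₀ : ℕ := max (τd + 1) τ₀ with hb₀def
  have hrec : ∀ b, b₀ ≤ b →
      η * ∏ i ∈ Finset.range D, w (b + i) ^ (k-1) ≤ w (b + D) := by
    intro b hb
    obtain ⟨μs, hμs⟩ := hw_eq (b + D)
    -- a path from μs to μm of length at most D
    have hjex : ∃ j ≤ D, HasPath f j μs μm := by
      by_cases hμ : μs = μm
      · exact ⟨0, Nat.zero_le D, hμ⟩
      · exact hasPath_shorten f μs μm (hA1 μs μm hμ)
    obtain ⟨j, hjD, hjp⟩ := hjex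
    obtain ⟨c, hc⟩ := Nat.le.dest hjD   -- j + c = D
    have hbc : τd < b + c := by omega
    have hηq : η ≤ q (b + c) μm := (hA3 (b + c) hbc).1.le
    have hb1 := hpathb j μs μm (b + c) hjp
    -- split the product
    have hsplit : ∏ i ∈ Finset.range D, w (b + i) ^ (k-1)
        = (∏ i ∈ Finset.range c, w (b + i) ^ (k-1)) *
          ∏ i ∈ Finset.range j, w ((b + c) + i) ^ (k-1) := by
      have : D = c + j := by omega
      rw [this, Finset.prod_range_add]
      congr 1
      apply Finset.prod_congr rfl
      intro i _
      congr 2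
      omega
    have hP1le : (∏ i ∈ Finset.range c, w (b + i) ^ (k-1)) ≤ 1 :=
      Finset.prod_le_one (fun i _ => pow_nonneg (hw0 _) _)
        (fun i _ => pow_le_one₀ (hw0 _) (hw1 _))
    have hP1nn : 0 ≤ ∏ i ∈ Finset.range c, w (b + i) ^ (k-1) :=
      Finset.prod_nonneg (fun i _ => pow_nonneg (hw0 _) _)
    have hP2nn : 0 ≤ ∏ i ∈ Finset.range j, w ((b + c) + i) ^ (k-1) :=
      Finset.prod_nonneg (fun i _ => pow_nonneg (hw0 _) _)
    have hfin : q (b + c) μm * ∏ i ∈ Finset.range j, w ((b + c) + i) ^ (k-1)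
        ≤ w (b + D) := by
      rw [hμs]
      have : (b + c) + j = b + D := by omega
      rw [← this]
      exact hb1
    calc η * ∏ i ∈ Finset.range D, w (b + i) ^ (k-1)
        = η * ((∏ i ∈ Finset.range c, w (b + i) ^ (k-1)) *
            ∏ i ∈ Finset.range j, w ((b + c) + i) ^ (k-1)) := by rw [hsplit]
      _ ≤ η * (1 * ∏ i ∈ Finset.range j, w ((b + c) + i) ^ (k-1)) := by
          apply mul_le_mul_of_nonneg_left _ hη.le
          exact mul_le_mul_of_nonneg_right hP1le hP2nn
      _ = η * ∏ i ∈ Finset.range j, w ((b + c) + i) ^ (k-1) := by ring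
      _ ≤ q (b + c) μm * ∏ i ∈ Finset.range j, w ((b + c) + i) ^ (k-1) :=
          mul_le_mul_of_nonneg_right hηq hP2nn
      _ ≤ w (b + D) := hfin
  -- the growth rate λ
  have hkD4 : (4:ℝ) ≤ (k:ℝ) ^ D := by
    calc (4:ℝ) = 2 ^ 2 := by norm_num
      _ ≤ (k:ℝ) ^ 2 := by nlinarith
      _ ≤ (k:ℝ) ^ D := by
        apply pow_le_pow_right₀ (by linarith) hD2
  have hbase3 : (3:ℝ) ≤ (k:ℝ) ^ D - 1 := by linarith
  have hbase_pos : (0:ℝ) < (k:ℝ) ^ D - 1 := by linarith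
  set lam : ℝ := ((k:ℝ) ^ D - 1) ^ ((D:ℝ)⁻¹) with hlamdef
  have hDne : (D:ℝ) ≠ 0 := by positivity
  have hlam_pow : lam ^ D = (k:ℝ) ^ D - 1 := by
    rw [hlamdef, ← Real.rpow_natCast (((k:ℝ) ^ D - 1) ^ ((D:ℝ)⁻¹)) D,
      ← Real.rpow_mul hbase_pos.le, inv_mul_cancel₀ hDne, Real.rpow_one]
  have hlam1 : 1 < lam := by
    rw [hlamdef]
    exact (Real.one_lt_rpow_iff_of_pos hbase_pos).mpr (Or.inl ⟨by linarith, by positivity⟩)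
  have hlam0 : (0:ℝ) < lam := by linarith
  have hlamk : lam < (k:ℝ) := by
    by_contra hcon
    push_neg at hcon
    have : (k:ℝ) ^ D ≤ lam ^ D := pow_le_pow_left₀ (by linarith) hcon D
    rw [hlam_pow] at this
    linarith
  -- geometric sums and the spectral gap
  set G : ℝ := ∑ i ∈ Finset.range D, lam ^ i with hGdef
  set H : ℝ := ∑ i ∈ Finset.range D, (k:ℝ) ^ i with hHdef
  have hGH : G < H := by
    apply Finset.sum_lt_sum
    · intro i _
      exact pow_le_pow_left₀ hlam0.le hlamk.le i
    · refine ⟨1, Finset.mem_range.mpr (by omega), ?_⟩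
      simpa using hlamk
  have hgeom : ((k:ℝ) - 1) * H = (k:ℝ) ^ D - 1 := by
    rw [hHdef, mul_comm]
    exact geom_sum_mul ((k:ℝ)) D
  have hgap : ((k:ℝ) - 1) * G < lam ^ D := by
    rw [hlam_pow, ← hgeom]
    have : (0:ℝ) < (k:ℝ) - 1 := by linarith
    nlinarith
  set γ : ℝ := lam ^ D - ((k:ℝ) - 1) * G with hγdef
  have hγpos : 0 < γ := by rw [hγdef]; linarith
  have hG0 : 0 ≤ G := Finset.sum_nonneg fun i _ => pow_nonneg hlam0.le i
  -- the log-cost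
  have hη1 : η < 1 := lt_of_lt_of_le (hA3 (τd + 1) (by omega)).1 (hq1 _ _)
  set B : ℝ := -Real.log η with hBdef
  have hB0 : 0 ≤ B := by
    rw [hBdef]
    simp only [neg_nonneg]
    exact Real.log_nonpos hη.le hη1.le
  set z : ℕ → ℝ := fun τ => -Real.log (w τ) with hzdef
  have hz0 : ∀ τ, 0 ≤ z τ := by
    intro τ
    simp only [hzdef, neg_nonneg]
    exact Real.log_nonpos (hw0 τ) (hw1 τ)
  have hzrec : ∀ b, b₀ ≤ b →
      z (b + D) ≤ B + ((k:ℝ) - 1) * ∑ i ∈ Finset.range D, z (b + i) := by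
    intro b hb
    have hτ₀b : τ₀ ≤ b := le_trans (le_max_right _ _) hb
    have hwpos : ∀ i ∈ Finset.range D, 0 < w (b + i) := fun i _ =>
      hw_pos (b + i) (by omega)
    have hPpos : 0 < ∏ i ∈ Finset.range D, w (b + i) ^ (k-1) :=
      Finset.prod_pos fun i hi => pow_pos (hwpos i hi) _
    have h1 := hrec b hb
    have h2 : Real.log (η * ∏ i ∈ Finset.range D, w (b + i) ^ (k-1))
        ≤ Real.log (w (b + D)) :=
      Real.log_le_log (by positivity) h1
    rw [Real.log_mul hη.ne' hPpos.ne',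
      Real.log_prod (fun i hi => (pow_pos (hwpos i hi) _).ne')] at h2
    have h3 : ∀ i ∈ Finset.range D,
        Real.log (w (b + i) ^ (k-1)) = ((k-1:ℕ):ℝ) * Real.log (w (b + i)) := by
      intro i _
      exact Real.log_pow _ _
    rw [Finset.sum_congr rfl h3] at h2
    have hcast : ((k-1:ℕ):ℝ) = (k:ℝ) - 1 := by
      push_cast [Nat.cast_sub (by omega : 1 ≤ k)]; ring
    rw [hcast] at h2
    have e2 : ∑ i ∈ Finset.range D, (((k:ℝ)-1) * Real.log (w (b + i)))
        = ((k:ℝ)-1) * ∑ i ∈ Finset.range D, Real.log (w (b + i)) :=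
      (Finset.mul_sum _ _ _).symm
    rw [e2] at h2
    have e1 : ∑ i ∈ Finset.range D, z (b + i)
        = -∑ i ∈ Finset.range D, Real.log (w (b + i)) := by
      simp [hzdef]
    simp only [hzdef, hBdef]
    rw [e1, mul_neg]
    set T : ℝ := ∑ i ∈ Finset.range D, Real.log (w (b + i))
    linarith
  -- solving the recursion: z grows at most like lam^τ
  set N : ℕ := b₀ + D with hNdef
  set A : ℝ := B / γ + ∑ τ ∈ Finset.range N, z τ with hAdef
  have hsumz0 : 0 ≤ ∑ τ ∈ Finset.range N, z τ :=
    Finset.sum_nonneg fun τ _ => hz0 τ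
  have hA0 : 0 ≤ A := by
    rw [hAdef]
    have : 0 ≤ B / γ := div_nonneg hB0 hγpos.le
    linarith
  have hlampow1 : ∀ n : ℕ, 1 ≤ lam ^ n := fun n => one_le_pow₀ hlam1.le
  have hzA : ∀ τ, z τ ≤ A * lam ^ τ := by
    intro τ
    induction τ using Nat.strong_induction_on with
    | _ τ ih =>
      rcases Nat.lt_or_ge τ N with hτN | hτN
      · have h1 : z τ ≤ ∑ τ' ∈ Finset.range N, z τ' :=
          Finset.single_le_sum (fun τ' _ => hz0 τ') (Finset.mem_range.mpr hτN)
        have h2 : z τ ≤ A := by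
          rw [hAdef]
          have h0 : 0 ≤ B / γ := div_nonneg hB0 hγpos.le
          exact le_add_of_nonneg_of_le h0 h1
        calc z τ ≤ A := h2
          _ ≤ A * lam ^ τ := le_mul_of_one_le_right hA0 (hlampow1 τ)
      · obtain ⟨b, hbeq, hbb⟩ : ∃ b, τ = b + D ∧ b₀ ≤ b :=
          ⟨τ - D, by omega, by omega⟩
        subst hbeq
        have h1 := hzrec b hbb
        have h2 : ∑ i ∈ Finset.range D, z (b + i) ≤ ∑ i ∈ Finset.range D, A * lam ^ (b + i) := by
          apply Finset.sum_le_sum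
          intro i hi
          exact ih (b + i) (by have := Finset.mem_range.mp hi; omega)
        have h3 : ∑ i ∈ Finset.range D, A * lam ^ (b + i) = A * lam ^ b * G := by
          rw [hGdef, Finset.mul_sum]
          apply Finset.sum_congr rfl
          intro i _
          rw [pow_add]
          ring
        have h4 : B ≤ A * lam ^ b * γ := by
          have hAγ : B ≤ A * γ := by
            rw [hAdef]
            have : B / γ * γ = B := div_mul_cancel₀ B hγpos.ne'
            nlinarith [mul_nonneg hsumz0 hγpos.le]
          calc B ≤ A * γ := hAγ
            _ ≤ A * lam ^ b * γ := by
              apply mul_le_mul_of_nonneg_right _ hγpos.le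
              exact le_mul_of_one_le_right hA0 (hlampow1 b)
        have hk1' : (0:ℝ) ≤ (k:ℝ) - 1 := by linarith
        calc z (b + D) ≤ B + ((k:ℝ) - 1) * ∑ i ∈ Finset.range D, z (b + i) := h1
          _ ≤ B + ((k:ℝ) - 1) * (A * lam ^ b * G) := by
              rw [← h3]
              exact add_le_add_right (mul_le_mul_of_nonneg_left (h3 ▸ h2) hk1') B
          _ ≤ A * lam ^ b * γ + ((k:ℝ) - 1) * (A * lam ^ b * G) := by linarith
          _ = A * lam ^ b * (γ + ((k:ℝ) - 1) * G) := by ring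
          _ = A * lam ^ b * lam ^ D := by rw [hγdef]; ring_nf
          _ = A * lam ^ (b + D) := by rw [pow_add]; ring
  -- error probability: basic facts
  have hq1nn : ∀ τ μ, 0 ≤ oblDist p₁ g f τ μ :=
    oblDist_nonneg p₁ g f (fun x => (hp₁pos x).le)
  set S0 : ℕ → ℝ := fun t => ∑ σ : Fin k → M,
    if h σ = true then ∏ i, oblDist p₀ g f t (σ i) else 0 with hS0def
  set S1 : ℕ → ℝ := fun t => ∑ σ : Fin k → M,
    if h σ = false then ∏ i, oblDist p₁ g f t (σ i) else 0 with hS1def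
  have hEeq : ∀ t, oblErr p₀ p₁ g f h t = (1/2) * S0 t + (1/2) * S1 t := fun t => rfl
  have hS0nn : ∀ t, 0 ≤ S0 t := by
    intro t
    apply Finset.sum_nonneg
    intro σ _
    try dsimp only
    split
    · exact Finset.prod_nonneg fun i _ => hq0 t (σ i)
    · exact le_refl _
  have hS1nn : ∀ t, 0 ≤ S1 t := by
    intro t
    apply Finset.sum_nonneg
    intro σ _
    try dsimp only
    split
    · exact Finset.prod_nonneg fun i _ => hq1nn t (σ i)
    · exact le_refl _
  have hS0le : ∀ t, S0 t ≤ 1 := by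
    intro t
    calc S0 t ≤ ∑ σ : Fin k → M, ∏ i, oblDist p₀ g f t (σ i) := by
          apply Finset.sum_le_sum
          intro σ _
          try dsimp only
          split
          · exact le_refl _
          · exact Finset.prod_nonneg fun i _ => hq0 t (σ i)
      _ = (∑ μ, oblDist p₀ g f t μ) ^ k := (Fintype.sum_pow _ k).symm
      _ = 1 := by rw [oblDist_sum p₀ g f hp₀sum t, one_pow]
  have hS1le : ∀ t, S1 t ≤ 1 := by
    intro t
    calc S1 t ≤ ∑ σ : Fin k → M, ∏ i, oblDist p₁ g f t (σ i) := by
          apply Finset.sum_le_sum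
          intro σ _
          try dsimp only
          split
          · exact le_refl _
          · exact Finset.prod_nonneg fun i _ => hq1nn t (σ i)
      _ = (∑ μ, oblDist p₁ g f t μ) ^ k := (Fintype.sum_pow _ k).symm
      _ = 1 := by rw [oblDist_sum p₁ g f hp₁sum t, one_pow]
  have hEle1 : ∀ t, oblErr p₀ p₁ g f h t ≤ 1 := by
    intro t
    rw [hEeq t]
    have := hS0le t
    have := hS1le t
    linarith
  have hEpos : ∀ t, 0 < oblErr p₀ p₁ g f h t := by
    intro t
    have hex : ∃ μ, 0 < q t μ := by
      by_contra hno
      push_neg at hno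
      have h1 : ∑ μ, q t μ ≤ 0 := Finset.sum_nonpos fun μ _ => hno μ
      have h2 : ∑ μ, q t μ = 1 := oblDist_sum p₀ g f hp₀sum t
      linarith
    obtain ⟨μs, hμs⟩ := hex
    have hμs1 : 0 < oblDist p₁ g f t μs :=
      oblDist_pos_trans p₀ g f p₁ hp₀pos hp₁pos t μs hμs
    rw [hEeq t]
    cases hb : h (fun _ => μs) with
    | true =>
      have hterm : (0:ℝ) < ∏ i : Fin k, oblDist p₀ g f t ((fun _ => μs) i) :=
        Finset.prod_pos fun i _ => hμs
      have h1 : (∏ i : Fin k, oblDist p₀ g f t ((fun _ => μs) i)) ≤ S0 t := by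
        have h0 := Finset.single_le_sum (f := fun σ : Fin k → M =>
          if h σ = true then ∏ i, oblDist p₀ g f t (σ i) else 0)
          (fun σ _ => by (try dsimp only); split
                         · exact Finset.prod_nonneg fun i _ => hq0 t (σ i)
                         · exact le_refl _)
          (Finset.mem_univ (fun _ : Fin k => μs))
        try dsimp only at h0
        rw [hb] at h0
        simpa using h0
      have := hS1nn t
      nlinarith
    | false =>
      have hterm : (0:ℝ) < ∏ i : Fin k, oblDist p₁ g f t ((fun _ => μs) i) :=
        Finset.prod_pos fun i _ => hμs1
      have h1 : (∏ i : Fin k, oblDist p₁ g f t ((fun _ => μs) i)) ≤ S1 t := by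
        have h0 := Finset.single_le_sum (f := fun σ : Fin k → M =>
          if h σ = false then ∏ i, oblDist p₁ g f t (σ i) else 0)
          (fun σ _ => by (try dsimp only); split
                         · exact Finset.prod_nonneg fun i _ => hq1nn t (σ i)
                         · exact le_refl _)
          (Finset.mem_univ (fun _ : Fin k => μs))
        try dsimp only at h0
        rw [hb] at h0
        simpa using h0
      have := hS0nn t
      nlinarith
  -- lower bound on the error for large depth
  have hElarge : ∀ t, N ≤ t →
      Real.exp (-Real.log 2 - (k:ℝ) * A * lam ^ t) ≤ oblErr p₀ p₁ g f h t := by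
    intro t ht
    have hτ₀t : τ₀ ≤ t := by
      have : τ₀ ≤ b₀ := le_max_right _ _
      omega
    by_cases hconst : ∀ σ : Fin k → M, h σ = false
    · have hS0 : S0 t = 0 := Finset.sum_eq_zero fun σ _ => by simp [hconst σ]
      have hS1 : S1 t = 1 := by
        have hcong : ∀ σ ∈ (Finset.univ : Finset (Fin k → M)),
            (if h σ = false then ∏ i, oblDist p₁ g f t (σ i) else 0)
              = ∏ i, oblDist p₁ g f t (σ i) := fun σ _ => by simp [hconst σ]
        calc S1 t = ∑ σ : Fin k → M, ∏ i, oblDist p₁ g f t (σ i) :=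
              Finset.sum_congr rfl hcong
          _ = (∑ μ, oblDist p₁ g f t μ) ^ k := (Fintype.sum_pow _ k).symm
          _ = 1 := by rw [oblDist_sum p₁ g f hp₁sum t, one_pow]
      rw [hEeq t, hS0, hS1]
      have h2 : Real.exp (-Real.log 2 - (k:ℝ)*A*lam^t) ≤ Real.exp (-Real.log 2) := by
        apply Real.exp_le_exp.mpr
        have hx : (0:ℝ) ≤ (k:ℝ)*A*lam^t := by positivity
        linarith
      have h3 : Real.exp (-Real.log 2) = 1/2 := by
        rw [Real.exp_neg, Real.exp_log (by norm_num : (0:ℝ) < 2)]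
        norm_num
      rw [h3] at h2
      linarith
    · push_neg at hconst
      obtain ⟨σt, hσt⟩ := hconst
      have hσt' : h σt = true := by revert hσt; cases h σt <;> simp
      have h1 : (∏ i, oblDist p₀ g f t (σt i)) ≤ S0 t := by
        have h0 := Finset.single_le_sum (f := fun σ : Fin k → M =>
          if h σ = true then ∏ i, oblDist p₀ g f t (σ i) else 0)
          (fun σ _ => by (try dsimp only); split
                         · exact Finset.prod_nonneg fun i _ => hq0 t (σ i)
                         · exact le_refl _)
          (Finset.mem_univ σt)
        try dsimp only at h0
        rw [hσt'] at h0
        simpa using h0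
      have h2 : w t ^ k ≤ ∏ i, oblDist p₀ g f t (σt i) := by
        calc w t ^ k = ∏ _i : Fin k, w t := by
              rw [Finset.prod_const, Finset.card_univ, Fintype.card_fin]
          _ ≤ ∏ i, oblDist p₀ g f t (σt i) :=
              Finset.prod_le_prod (fun i _ => hw0 t) (fun i _ => hw_le t (σt i))
      have hwt : w t = Real.exp (-(z t)) := by
        have : z t = -Real.log (w t) := rfl
        rw [this, neg_neg, Real.exp_log (hw_pos t hτ₀t)]
      have h3 : Real.exp (-((k:ℝ) * (A * lam ^ t))) ≤ w t ^ k := by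
        rw [hwt, ← Real.exp_nat_mul]
        apply Real.exp_le_exp.mpr
        have hz := hzA t
        have hk0 : (0:ℝ) ≤ (k:ℝ) := by positivity
        nlinarith
      have hfin : Real.exp (-Real.log 2 - (k:ℝ) * A * lam ^ t)
          = (1/2) * Real.exp (-((k:ℝ) * (A * lam ^ t))) := by
        rw [sub_eq_add_neg, Real.exp_add, Real.exp_neg, Real.exp_log (by norm_num : (0:ℝ) < 2)]
        ring_nf
      rw [hEeq t, hfin]
      have hS1t := hS1nn t
      have hchain : Real.exp (-((k:ℝ) * (A * lam ^ t))) ≤ S0 t :=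
        le_trans h3 (le_trans h2 h1)
      linarith
  -- the exponent ρ equals log lam / log k
  have hlogk : 0 < Real.log k := Real.log_pos hk1
  have hkDinv_pos : (0:ℝ) < ((k:ℝ)^D)⁻¹ := by positivity
  have hkDinv_lt : ((k:ℝ)^D)⁻¹ < 1 := by
    rw [inv_lt_one_iff₀]
    right
    linarith
  have hxpos : (0:ℝ) < 1 - ((k:ℝ)^D)⁻¹ := by linarith
  have hx1 : 1 - ((k:ℝ)^D)⁻¹ < 1 := by linarith
  set ρ : ℝ := 1 + Real.log (1 - ((k:ℝ) ^ D)⁻¹) / ((D:ℝ) * Real.log k) with hρdef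
  have hρ1 : ρ < 1 := by
    rw [hρdef]
    have hneg : Real.log (1 - ((k:ℝ)^D)⁻¹) < 0 := Real.log_neg hxpos hx1
    have hpos : (0:ℝ) < (D:ℝ) * Real.log k := by positivity
    have := div_neg_of_neg_of_pos hneg hpos
    linarith
  have hrholam : Real.log k * ρ = Real.log lam := by
    have hloglam : Real.log lam = (D:ℝ)⁻¹ * Real.log ((k:ℝ)^D - 1) := by
      rw [hlamdef, Real.log_rpow hbase_pos]
    have hbaseeq : (k:ℝ)^D - 1 = (k:ℝ)^D * (1 - ((k:ℝ)^D)⁻¹) := by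
      field_simp
    have hlogbase : Real.log ((k:ℝ)^D - 1)
        = (D:ℝ) * Real.log k + Real.log (1 - ((k:ℝ)^D)⁻¹) := by
      rw [hbaseeq, Real.log_mul (by positivity) hxpos.ne', Real.log_pow]
    rw [hρdef, hloglam, hlogbase]
    field_simp
    try ring
  have hpowρ : ∀ t : ℕ, ((k:ℝ) ^ (t+1)) ^ ρ = lam ^ (t+1) := by
    intro t
    have hkpos : (0:ℝ) < (k:ℝ)^(t+1) := by positivity
    rw [Real.rpow_def_of_pos hkpos, Real.log_pow]
    have e : ((t+1 : ℕ):ℝ) * Real.log k * ρ = ((t+1:ℕ):ℝ) * Real.log lam := by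
      rw [mul_assoc, hrholam]
    rw [e, ← Real.log_pow, Real.exp_log (pow_pos hlam0 _)]
  -- the final constant
  have hlog2 : (0:ℝ) ≤ Real.log 2 := Real.log_nonneg (by norm_num)
  have hkA0 : (0:ℝ) ≤ (k:ℝ) * A := by positivity
  set Es : ℝ := ∑ t ∈ Finset.range N, (-Real.log (oblErr p₀ p₁ g f h t)) with hEsdef
  have hEsnn : ∀ t ∈ Finset.range N, (0:ℝ) ≤ -Real.log (oblErr p₀ p₁ g f h t) := by
    intro t _
    simp only [neg_nonneg]
    exact Real.log_nonpos (hEpos t).le (hEle1 t)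
  have hEs0 : 0 ≤ Es := Finset.sum_nonneg hEsnn
  set Cex : ℝ := Real.log 2 + (k:ℝ) * A + Es with hCdef
  have hC0 : 0 ≤ Cex := by rw [hCdef]; linarith
  refine ⟨hρ1, Cex, ?_⟩
  intro t
  rw [hpowρ t]
  rcases Nat.lt_or_ge t N with htN | htN
  · -- small depth
    have hE := hEpos t
    have hterm : -Real.log (oblErr p₀ p₁ g f h t) ≤ Es :=
      Finset.single_le_sum hEsnn (Finset.mem_range.mpr htN)
    have hCt : -Real.log (oblErr p₀ p₁ g f h t) ≤ Cex := by
      rw [hCdef]; linarith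
    have h1 : -Cex * lam ^ (t+1) ≤ -Cex := by
      have := hlampow1 (t+1)
      nlinarith
    have h2 : -Cex ≤ Real.log (oblErr p₀ p₁ g f h t) := by linarith
    calc Real.exp (-Cex * lam ^ (t+1)) ≤ Real.exp (Real.log (oblErr p₀ p₁ g f h t)) :=
          Real.exp_le_exp.mpr (by linarith)
      _ = oblErr p₀ p₁ g f h t := Real.exp_log hE
  · -- large depth
    refine le_trans ?_ (hElarge t htN)
    apply Real.exp_le_exp.mpr
    have e1 : Real.log 2 ≤ Real.log 2 * lam^(t+1) :=
      le_mul_of_one_le_right hlog2 (hlampow1 _)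
    have e2 : (k:ℝ)*A*lam^t ≤ (k:ℝ)*A*lam^(t+1) :=
      mul_le_mul_of_nonneg_left (pow_le_pow_right₀ hlam1.le (Nat.le_succ t)) hkA0
    have e3 : (0:ℝ) ≤ Es * lam^(t+1) := mul_nonneg hEs0 (pow_nonneg hlam0.le _)
    have expand : Cex * lam^(t+1)
        = Real.log 2 * lam^(t+1) + (k:ℝ)*A*lam^(t+1) + Es*lam^(t+1) := by
      rw [hCdef]; ring
    nlinarith
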